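/- Let ν be a probability measure on a measurable space S and n a positive integer. Let N be a positive integer, R ≥ 1, Λ > 0, and let Θ be a countable nonempty subset of {θ ∈ ℝ^N : ‖θ‖_∞ ≤ R}. Let θ ↦ h_θ assign to each θ ∈ Θ a bounded measurable function on S such that sup_S |h_θ − h_{θ'}| ≤ Λ·‖θ − θ'‖₂ for all θ, θ' ∈ Θ. Set M := sup_{θ∈Θ} sup_S |h_θ| and assume n^{−1/2} ≤ M ≤ 2RΛN. Then the Rademacher complexity of F = {h_θ : θ ∈ Θ} satisfies R_n(F) ≤ 4·n^{−1/2} + 12·n^{−1/2}·M·(N·log(2RΛN·√n))^{1/2}. -/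

import Mathlib

open MeasureTheory Set

noncomputable section

/-- The value `±1` of a Rademacher sign encoded as a Boolean. -/
def sgn (b : Bool) : ℝ := if b then 1 else -1

/-- Joint law of `n` i.i.d. samples from `ν` together with `n` independent
Rademacher signs. -/
def radMeasure {S : Type*} [MeasurableSpace S] (ν : Measure S) (n : ℕ) :
    Measure ((Fin n → S) × (Fin n → Bool)) :=
  (Measure.pi fun _ => ν).prod (Measure.pi fun _ => (PMF.uniformOfFintype Bool).toMeasure)

/-- The Rademacher complexity `R_n(F)`. -/
def radComplexity {S : Type*} [MeasurableSpace S] (ν : Measure S) (n : ℕ)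
    (F : Set (S → ℝ)) : ℝ :=
  ∫ p, sSup ((fun v => (n : ℝ)⁻¹ * ∑ j, sgn (p.2 j) * v (p.1 j)) '' F) ∂(radMeasure ν n)

/-- `T` is an `ε`-cover of `A` with respect to the distance function `dd`. -/
def IsCover {X : Type*} (dd : X → X → ℝ) (A : Set X) (ε : ℝ) (T : Finset X) : Prop :=
  ↑T ⊆ A ∧ ∀ a ∈ A, ∃ t ∈ T, dd a t ≤ ε

/-- The `ε`-covering number of `A` (minimal cardinality of an `ε`-cover, `⊤` if none). -/
def covN {X : Type*} (dd : X → X → ℝ) (A : Set X) (ε : ℝ) : ℕ∞ :=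
  sInf {k : ℕ∞ | ∃ T : Finset X, IsCover dd A ε T ∧ (T.card : ℕ∞) = k}

/-- Sup-norm distance between real-valued functions. -/
def supDist {S : Type*} (f g : S → ℝ) : ℝ := ⨆ x, |f x - g x|

end


section Aux
open Finset

lemma sgn_abs (b : Bool) : |sgn b| = 1 := by cases b <;> simp [sgn]

lemma massart_key {ι : Type*} (T : Finset ι) (hT : T.Nonempty) {n : ℕ}
    (a : ι → Fin n → ℝ) (M : ℝ) (ha : ∀ t ∈ T, ∀ j, |a t j| ≤ M)
    (lam : ℝ) (hlam : 0 < lam) :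
    lam * (∑ ω : Fin n → Bool, ((2:ℝ)^n)⁻¹ * (T.sup' hT fun t => ∑ j, sgn (ω j) * a t j))
      ≤ Real.log T.card + lam^2 * n * M^2 / 2 := by
  set g : (Fin n → Bool) → ℝ := fun ω => T.sup' hT fun t => ∑ j, sgn (ω j) * a t j with hg
  set A : ℝ := ∑ ω : Fin n → Bool, ((2:ℝ)^n)⁻¹ * g ω with hA
  have hw : ∑ _ω : Fin n → Bool, ((2:ℝ)^n)⁻¹ = 1 := by
    rw [Finset.sum_const]
    simp [Fintype.card_fun]
  -- Jensen
  have jensen : Real.exp (lam * A) ≤ ∑ ω : Fin n → Bool, ((2:ℝ)^n)⁻¹ * Real.exp (lam * g ω) := by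
    have := convexOn_exp.map_sum_le (t := (Finset.univ : Finset (Fin n → Bool)))
      (w := fun _ => ((2:ℝ)^n)⁻¹) (p := fun ω => lam * g ω)
      (fun _ _ => by positivity) hw (fun _ _ => Set.mem_univ _)
    simpa [smul_eq_mul, Finset.mul_sum, hA, mul_left_comm, mul_comm, mul_assoc] using this
  -- bound each exp(lam * g ω) by sum over t
  have step2 : ∀ ω : Fin n → Bool, Real.exp (lam * g ω)
      ≤ ∑ t ∈ T, Real.exp (lam * ∑ j, sgn (ω j) * a t j) := by
    intro ω
    obtain ⟨t0, ht0, hval⟩ := T.exists_mem_eq_sup' hT (fun t => ∑ j, sgn (ω j) * a t j)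
    have : g ω = ∑ j, sgn (ω j) * a t0 j := hval
    rw [this]
    exact Finset.single_le_sum (f := fun t => Real.exp (lam * ∑ j, sgn (ω j) * a t j))
      (fun t _ => (Real.exp_pos _).le) ht0
  -- product formula
  have step3 : ∀ t,
      (∑ ω : Fin n → Bool, ((2:ℝ)^n)⁻¹ * Real.exp (lam * ∑ j, sgn (ω j) * a t j))
        = ∏ j : Fin n, Real.cosh (lam * a t j) := by
    intro t
    have h1 : ∀ ω : Fin n → Bool, ((2:ℝ)^n)⁻¹ * Real.exp (lam * ∑ j, sgn (ω j) * a t j)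
        = ∏ j : Fin n, ((2:ℝ)⁻¹ * Real.exp (lam * (sgn (ω j) * a t j))) := by
      intro ω
      rw [Finset.prod_mul_distrib, Finset.mul_sum, Real.exp_sum, Finset.prod_const]
      simp [inv_pow]
    simp_rw [h1]
    rw [← Fintype.piFinset_univ,
      Finset.sum_prod_piFinset Finset.univ (fun j b => (2:ℝ)⁻¹ * Real.exp (lam * (sgn b * a t j)))]
    congr 1; funext j
    rw [Fintype.sum_bool]
    simp only [show sgn true = 1 from rfl, show sgn false = -1 from rfl, Real.cosh_eq]
    ring
  -- cosh bound
  have step4 : ∀ t ∈ T, (∏ j : Fin n, Real.cosh (lam * a t j))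
      ≤ Real.exp (lam^2 * n * M^2 / 2) := by
    intro t ht
    calc ∏ j : Fin n, Real.cosh (lam * a t j)
        ≤ ∏ j : Fin n, Real.exp ((lam * a t j)^2 / 2) := by
          apply Finset.prod_le_prod (fun j _ => (Real.cosh_pos _).le)
          exact fun j _ => Real.cosh_le_exp_half_sq _
      _ = Real.exp (∑ j : Fin n, (lam * a t j)^2 / 2) := (Real.exp_sum _ _).symm
      _ ≤ Real.exp (lam^2 * n * M^2 / 2) := by
          apply Real.exp_le_exp.2
          have : ∀ j : Fin n, (lam * a t j)^2 / 2 ≤ lam^2 * M^2 / 2 := by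
            intro j
            have h2 : (a t j)^2 ≤ M^2 := sq_le_sq' (by linarith [abs_le.1 (ha t ht j)]) (abs_le.1 (ha t ht j)).2
            rw [mul_pow]
            nlinarith [sq_nonneg lam]
          calc ∑ j : Fin n, (lam * a t j)^2/2 ≤ ∑ _j : Fin n, lam^2 * M^2/2 :=
                Finset.sum_le_sum (fun j _ => this j)
            _ = lam^2 * n * M^2 / 2 := by rw [Finset.sum_const]; simp; ring
  -- combine
  have main : Real.exp (lam * A) ≤ T.card * Real.exp (lam^2 * n * M^2 / 2) := by
    calc Real.exp (lam * A) ≤ ∑ ω : Fin n → Bool, ((2:ℝ)^n)⁻¹ * Real.exp (lam * g ω) := jensen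
      _ ≤ ∑ ω : Fin n → Bool, ((2:ℝ)^n)⁻¹ * ∑ t ∈ T, Real.exp (lam * ∑ j, sgn (ω j) * a t j) := by
          apply Finset.sum_le_sum
          exact fun ω _ => mul_le_mul_of_nonneg_left (step2 ω) (by positivity)
      _ = ∑ t ∈ T, ∑ ω : Fin n → Bool, ((2:ℝ)^n)⁻¹ * Real.exp (lam * ∑ j, sgn (ω j) * a t j) := by
          simp_rw [Finset.mul_sum]; rw [Finset.sum_comm]
      _ = ∑ t ∈ T, ∏ j : Fin n, Real.cosh (lam * a t j) := by
          exact Finset.sum_congr rfl (fun t _ => step3 t)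
      _ ≤ ∑ _t ∈ T, Real.exp (lam^2 * n * M^2 / 2) := Finset.sum_le_sum step4
      _ = T.card * Real.exp (lam^2 * n * M^2 / 2) := by rw [Finset.sum_const]; simp [nsmul_eq_mul]
  have hcard : (0:ℝ) < T.card := by exact_mod_cast hT.card_pos
  calc lam * A = Real.log (Real.exp (lam * A)) := (Real.log_exp _).symm
    _ ≤ Real.log (T.card * Real.exp (lam^2 * n * M^2 / 2)) :=
        Real.log_le_log (Real.exp_pos _) main
    _ = Real.log T.card + lam^2 * n * M^2 / 2 := by
        rw [Real.log_mul (ne_of_gt hcard) (Real.exp_ne_zero _), Real.log_exp]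

lemma massart {ι : Type*} (T : Finset ι) (hT : T.Nonempty) {n : ℕ} (hn : 0 < n)
    (a : ι → Fin n → ℝ) (M : ℝ) (hM : 0 < M) (ha : ∀ t ∈ T, ∀ j, |a t j| ≤ M)
    (C : ℝ) (hC0 : 0 ≤ C) (hC : Real.log T.card ≤ C) :
    (∑ ω : Fin n → Bool, ((2:ℝ)^n)⁻¹ * (T.sup' hT fun t => ∑ j, sgn (ω j) * a t j))
      ≤ M * Real.sqrt n * Real.sqrt (2 * C) := by
  set A := ∑ ω : Fin n → Bool, ((2:ℝ)^n)⁻¹ * (T.sup' hT fun t => ∑ j, sgn (ω j) * a t j) with hA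
  have hn' : (0:ℝ) < n := by exact_mod_cast hn
  have key : ∀ lam : ℝ, 0 < lam → A ≤ C / lam + lam * n * M^2 / 2 := by
    intro lam hlam
    have h := massart_key T hT a M ha lam hlam
    rw [← hA] at h
    have h2 : lam * A ≤ C + lam^2 * n * M^2/2 := by linarith
    rw [← le_div_iff₀' hlam] at h2
    calc A ≤ (C + lam^2 * n * M^2/2) / lam := h2
      _ = C / lam + lam * n * M^2 / 2 := by field_simp
  rcases eq_or_lt_of_le hC0 with h0 | hCpos
  · -- C = 0
    have : A ≤ 0 := by
      refine le_of_forall_pos_le_add ?_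
      intro ε hε
      have hl : 0 < 2 * ε / (n * M^2) := by positivity
      have := key _ hl
      rw [← h0] at this
      have h3 : A ≤ (2 * ε / (n * M^2)) * n * M^2 / 2 := by simpa using this
      have heq : (2 * ε / ((n:ℝ) * M^2)) * n * M^2 / 2 = ε := by field_simp
      linarith
    rw [← h0]
    simpa using this.trans (by positivity)
  · set lam := Real.sqrt (2 * C) / (M * Real.sqrt n) with hlam
    have hsn : (0:ℝ) < Real.sqrt n := Real.sqrt_pos.2 hn'
    have hs2C : (0:ℝ) < Real.sqrt (2 * C) := Real.sqrt_pos.2 (by linarith)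
    have hlpos : 0 < lam := by positivity
    have := key lam hlpos
    have hsq : Real.sqrt (2*C) ^ 2 = 2 * C := Real.sq_sqrt (by linarith)
    have hnn : Real.sqrt n ^ 2 = n := Real.sq_sqrt hn'.le
    calc A ≤ C / lam + lam * n * M^2 / 2 := this
      _ = M * Real.sqrt n * Real.sqrt (2 * C) := by
        have e1 : C / lam = M * Real.sqrt n * Real.sqrt (2*C) / 2 := by
          rw [hlam, div_div_eq_mul_div, div_eq_div_iff (by positivity) (by norm_num)]
          linear_combination (-(M * Real.sqrt (n:ℝ))) * hsq
        have e2 : lam * n * M^2/2 = M * Real.sqrt n * Real.sqrt (2*C)/2 := by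
          rw [hlam, div_mul_eq_mul_div, div_mul_eq_mul_div, div_div,
            div_eq_div_iff (by positivity) (by positivity)]
          linear_combination (-(2*M^2*Real.sqrt (2*C))) * hnn
        rw [e1, e2]; ring

lemma exists_cover (N : ℕ) (hN : 0 < N) (R Λ : ℝ) (hR : 1 ≤ R) (hΛ : 0 < Λ)
    (Θ : Set (Fin N → ℝ)) (hΘne : Θ.Nonempty) (hΘb : ∀ θ ∈ Θ, ∀ i, |θ i| ≤ R)
    (n : ℕ) (hn : 0 < n) (hB : 1 ≤ 2*R*Λ*N*Real.sqrt n) :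
    ∃ T : Finset (Fin N → ℝ), ↑T ⊆ Θ ∧ T.Nonempty ∧
      Real.log T.card ≤ N * Real.log (2*R*Λ*N*Real.sqrt n) ∧
      ∀ θ ∈ Θ, ∃ t ∈ T, Λ * Real.sqrt (∑ i, (θ i - t i)^2) ≤ 4 / Real.sqrt n := by
  classical
  have hn' : (0:ℝ) < n := by exact_mod_cast hn
  have hN' : (1:ℝ) ≤ N := by exact_mod_cast hN
  set sn := Real.sqrt n with hsn
  have hsnpos : 0 < sn := Real.sqrt_pos.2 hn'
  set sN := Real.sqrt N with hsN
  have hsN1 : 1 ≤ sN := by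
    rw [hsN]
    rw [show (1:ℝ) = Real.sqrt 1 from (Real.sqrt_one).symm]
    exact Real.sqrt_le_sqrt hN'
  have hsNpos : 0 < sN := lt_of_lt_of_le one_pos hsN1
  have hsNsq : sN^2 = N := Real.sq_sqrt (by positivity)
  have hlogB : 0 ≤ Real.log (2*R*Λ*N*sn) := Real.log_nonneg hB
  by_cases hA : 2*R*sN ≤ 4/(Λ*sn)
  · -- single point cover
    obtain ⟨θ₀, hθ₀⟩ := hΘne
    refine ⟨{θ₀}, by simpa using hθ₀, Finset.singleton_nonempty _, by simpa using by positivity, ?_⟩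
    intro θ hθ
    refine ⟨θ₀, Finset.mem_singleton_self _, ?_⟩
    have hbd : Real.sqrt (∑ i, (θ i - θ₀ i)^2) ≤ 2*R*sN := by
      have h1 : ∑ i, (θ i - θ₀ i)^2 ≤ ∑ _i : Fin N, (2*R)^2 := by
        apply Finset.sum_le_sum
        intro i _
        have := abs_sub_abs_le_abs_sub (θ i) (θ₀ i)
        have h2 : |θ i - θ₀ i| ≤ 2*R := by
          calc |θ i - θ₀ i| ≤ |θ i| + |θ₀ i| := abs_sub _ _
            _ ≤ 2*R := by linarith [hΘb θ hθ i, hΘb θ₀ hθ₀ i]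
        calc (θ i - θ₀ i)^2 = |θ i - θ₀ i|^2 := (sq_abs _).symm
          _ ≤ (2*R)^2 := by nlinarith [abs_nonneg (θ i - θ₀ i)]
      have h3 : ∑ _i : Fin N, (2*R:ℝ)^2 = N * (2*R)^2 := by rw [Finset.sum_const]; simp
      calc Real.sqrt (∑ i, (θ i - θ₀ i)^2) ≤ Real.sqrt (N * (2*R)^2) := by
            apply Real.sqrt_le_sqrt; rw [← h3]; exact h1
        _ = sN * (2*R) := by
            rw [Real.sqrt_mul (by positivity), Real.sqrt_sq (by positivity)]
        _ = 2*R*sN := by ring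
    calc Λ * Real.sqrt (∑ i, (θ i - θ₀ i)^2) ≤ Λ * (2*R*sN) :=
          mul_le_mul_of_nonneg_left hbd hΛ.le
      _ ≤ Λ * (4/(Λ*sn)) := mul_le_mul_of_nonneg_left hA hΛ.le
      _ = 4/sn := by field_simp
  · -- grid cover
    push_neg at hA
    set s : ℝ := 4/(Λ*sN*sn) with hs
    have hspos : 0 < s := by positivity
    have hxval : R/s = R*Λ*sN*sn/4 := by rw [hs]; field_simp
    have hxhalf : 1/2 < R/s := by
      rw [hxval]
      rw [div_lt_iff₀ (by positivity)] at hA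
      nlinarith
    set c : (Fin N → ℝ) → (Fin N → ℤ) := fun θ i => ⌊θ i / s⌋ with hc
    set K := c '' Θ with hK
    have hKsub : K ⊆ ↑(Fintype.piFinset fun _ : Fin N => Finset.Icc ⌊-R/s⌋ ⌊R/s⌋) := by
      rintro k ⟨θ, hθ, rfl⟩
      simp only [Finset.mem_coe, Fintype.mem_piFinset, Finset.mem_Icc]
      intro i
      have hb := abs_le.1 (hΘb θ hθ i)
      constructor
      · exact Int.floor_le_floor ((div_le_div_iff_of_pos_right hspos).2 hb.1)
      · exact Int.floor_le_floor ((div_le_div_iff_of_pos_right hspos).2 hb.2)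
    have hKfin : K.Finite :=
      Set.Finite.subset (Fintype.piFinset fun _ : Fin N => Finset.Icc ⌊-R/s⌋ ⌊R/s⌋).finite_toSet hKsub
    set rep : (Fin N → ℤ) → (Fin N → ℝ) :=
      fun k => if h : ∃ θ ∈ Θ, c θ = k then h.choose else hΘne.choose with hrep
    have hrep1 : ∀ k (h : ∃ θ ∈ Θ, c θ = k), rep k ∈ Θ ∧ c (rep k) = k := by
      intro k h
      rw [hrep]
      simp only [dif_pos h]
      exact ⟨h.choose_spec.1, h.choose_spec.2⟩
    refine ⟨hKfin.toFinset.image rep, ?_, ?_, ?_, ?_⟩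
    · intro t ht
      simp only [Finset.coe_image, Set.mem_image, Set.Finite.coe_toFinset] at ht
      obtain ⟨k, hk, rfl⟩ := ht
      obtain ⟨θ, hθ, hcθ⟩ := hk
      exact (hrep1 k ⟨θ, hθ, hcθ⟩).1
    · apply Finset.Nonempty.image
      rw [Set.Finite.toFinset_nonempty]
      exact hΘne.image c
    · -- cardinality
      have hcard1 : (hKfin.toFinset.image rep).card ≤ hKfin.toFinset.card := Finset.card_image_le
      have hcard2 : hKfin.toFinset.card ≤ (Fintype.piFinset fun _ : Fin N => Finset.Icc ⌊-R/s⌋ ⌊R/s⌋).card :=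
        Finset.card_le_card (Set.Finite.toFinset_subset.2 hKsub)
      have hcard3 : (Fintype.piFinset fun _ : Fin N => Finset.Icc ⌊-R/s⌋ ⌊R/s⌋).card
          = (⌊R/s⌋ + 1 - ⌊-R/s⌋).toNat ^ N := by
        rw [Fintype.card_piFinset]
        simp [Int.card_Icc]
      set m : ℕ := (⌊R/s⌋ + 1 - ⌊-R/s⌋).toNat with hm
      have hmreal : (m:ℝ) ≤ 2*(R/s) + 2 := by
        have h0 : (0:ℤ) ≤ ⌊R/s⌋ + 1 - ⌊-R/s⌋ := by
          have : ⌊-R/s⌋ ≤ ⌊R/s⌋ := Int.floor_le_floor (by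
            apply (div_le_div_iff_of_pos_right hspos).2; linarith)
          omega
        have : ((m:ℤ):ℝ) = ((⌊R/s⌋ + 1 - ⌊-R/s⌋ : ℤ) : ℝ) := by
          rw [hm, Int.toNat_of_nonneg h0]
        rw [show ((m:ℤ):ℝ) = (m:ℝ) from by push_cast; ring] at this
        rw [this]
        push_cast
        have h1 : ((⌊R/s⌋:ℝ)) ≤ R/s := Int.floor_le _
        have h2 : -R/s - 1 < ((⌊-R/s⌋:ℤ):ℝ) := Int.sub_one_lt_floor _
        have e : -R/s = -(R/s) := by ring
        push_cast at h1 h2 ⊢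
        linarith [e]
      have hxB : 2*(R/s) + 2 ≤ 2*R*Λ*N*sn := by
        have hBval : 2*R*Λ*N*sn = 8*(R/s)*sN := by
          rw [hxval]
          linear_combination (-(2*R*Λ*sn)) * hsNsq
        rw [hBval]
        nlinarith [hxhalf, hsN1]
      have hcard : ((hKfin.toFinset.image rep).card : ℝ) ≤ (2*R*Λ*N*sn)^N := by
        calc ((hKfin.toFinset.image rep).card : ℝ) ≤ (m:ℝ)^N := by
              exact_mod_cast (hcard1.trans (hcard2.trans_eq hcard3))
          _ ≤ (2*R*Λ*N*sn)^N := by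
              apply pow_le_pow_left₀ (by positivity)
              linarith
      rcases Finset.eq_empty_or_nonempty (hKfin.toFinset.image rep) with he | hne
      · simp [he]; positivity
      · have hpos : (0:ℝ) < (hKfin.toFinset.image rep).card := by exact_mod_cast hne.card_pos
        calc Real.log (hKfin.toFinset.image rep).card ≤ Real.log ((2*R*Λ*N*sn)^N) :=
              Real.log_le_log hpos hcard
          _ = N * Real.log (2*R*Λ*N*sn) := by rw [Real.log_pow]
    · -- covering property
      intro θ hθ
      have hk : ∃ θ' ∈ Θ, c θ' = c θ := ⟨θ, hθ, rfl⟩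
      refine ⟨rep (c θ), ?_, ?_⟩
      · apply Finset.mem_image_of_mem
        rw [Set.Finite.mem_toFinset]
        exact ⟨θ, hθ, rfl⟩
      · obtain ⟨hrin, hrc⟩ := hrep1 (c θ) hk
        have hcoord : ∀ i, |θ i - rep (c θ) i| ≤ s := by
          intro i
          have hfl : ⌊θ i / s⌋ = ⌊rep (c θ) i / s⌋ := by
            have := congrFun hrc i
            simp only [hc] at this ⊢
            omega
          have habs : |θ i / s - rep (c θ) i / s| < 1 := Int.abs_sub_lt_one_of_floor_eq_floor hfl
          have : |θ i - rep (c θ) i| / s < 1 := by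
            rwa [← sub_div, abs_div, abs_of_pos hspos] at habs
          calc |θ i - rep (c θ) i| = |θ i - rep (c θ) i|/s * s := by field_simp
            _ ≤ 1 * s := by
              apply mul_le_mul_of_nonneg_right this.le hspos.le
            _ = s := one_mul s
        have hsum : ∑ i, (θ i - rep (c θ) i)^2 ≤ N * s^2 := by
          calc ∑ i, (θ i - rep (c θ) i)^2 ≤ ∑ _i : Fin N, s^2 := by
                apply Finset.sum_le_sum
                intro i _
                calc (θ i - rep (c θ) i)^2 = |θ i - rep (c θ) i|^2 := (sq_abs _).symm
                  _ ≤ s^2 := by nlinarith [abs_nonneg (θ i - rep (c θ) i), hcoord i]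
            _ = N * s^2 := by rw [Finset.sum_const]; simp
        calc Λ * Real.sqrt (∑ i, (θ i - rep (c θ) i)^2)
            ≤ Λ * Real.sqrt (N * s^2) := by
              apply mul_le_mul_of_nonneg_left (Real.sqrt_le_sqrt hsum) hΛ.le
          _ = Λ * (sN * s) := by
              rw [Real.sqrt_mul (by positivity), Real.sqrt_sq hspos.le]
          _ = 4/sn := by rw [hs]; field_simp

end Aux

noncomputable section

/-- Rademacher complexity bound for a class parametrized Lipschitz-continuously (in
sup-norm, with respect to the Euclidean parameter distance) by a bounded countable
parameter set in `ℝ^N`, via Dudley's bound and the ball covering number. -/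
theorem rademacher_bound_lipschitz_parametrization {S : Type*} [MeasurableSpace S]
    (ν : Measure S) (hν : IsProbabilityMeasure ν)
    (n N : ℕ) (hn : 0 < n) (hN : 0 < N)
    (R Λ : ℝ) (hR : 1 ≤ R) (hΛ : 0 < Λ)
    (Θ : Set (Fin N → ℝ)) (hΘc : Θ.Countable) (hΘne : Θ.Nonempty)
    (hΘb : ∀ θ ∈ Θ, ∀ i, |θ i| ≤ R)
    (hmap : (Fin N → ℝ) → S → ℝ)
    (hmeas : ∀ θ ∈ Θ, Measurable (hmap θ))
    (hlip : ∀ θ ∈ Θ, ∀ θ' ∈ Θ, ∀ x,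
      |hmap θ x - hmap θ' x| ≤ Λ * Real.sqrt (∑ i, (θ i - θ' i) ^ 2))
    (M : ℝ) (hMb : ∀ θ ∈ Θ, ∀ x, |hmap θ x| ≤ M)
    (hM1 : (n : ℝ) ^ (-(1/2 : ℝ)) ≤ M) (hM2 : M ≤ 2 * R * Λ * N) :
    radComplexity ν n (hmap '' Θ)
      ≤ 4 * (n : ℝ) ^ (-(1/2 : ℝ))
        + 12 * (n : ℝ) ^ (-(1/2 : ℝ)) * M
          * Real.sqrt (N * Real.log (2 * R * Λ * N * Real.sqrt n)) := by
  classical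
  have hn' : (0:ℝ) < n := by exact_mod_cast hn
  set sn := Real.sqrt n with hsn
  have hsnpos : 0 < sn := Real.sqrt_pos.2 hn'
  have hsnsq : sn * sn = (n:ℝ) := Real.mul_self_sqrt hn'.le
  have hrpow : (n:ℝ) ^ (-(1/2 : ℝ)) = sn⁻¹ := by
    rw [Real.rpow_neg hn'.le, hsn, Real.sqrt_eq_rpow]
  have hMpos : 0 < M := lt_of_lt_of_le (by rw [hrpow]; positivity) hM1
  have hB : 1 ≤ 2*R*Λ*(N:ℝ)*sn := by
    have h1 : 1 ≤ M * sn := by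
      rw [hrpow] at hM1
      calc (1:ℝ) = sn⁻¹ * sn := by field_simp
        _ ≤ M * sn := mul_le_mul_of_nonneg_right hM1 hsnpos.le
    calc (1:ℝ) ≤ M * sn := h1
      _ ≤ 2*R*Λ*(N:ℝ)*sn := mul_le_mul_of_nonneg_right hM2 hsnpos.le
  set C := (N:ℝ) * Real.log (2*R*Λ*(N:ℝ)*sn) with hC
  have hC0 : 0 ≤ C := by
    rw [hC]
    have := Real.log_nonneg hB
    positivity
  obtain ⟨T, hTsub, hTne, hTcard, hTcover⟩ :=
    exists_cover N hN R Λ hR hΛ Θ hΘne hΘb n hn hB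
  -- countable parametrization
  obtain ⟨f, hf⟩ := Set.Countable.exists_eq_range hΘc hΘne
  have hfΘ : ∀ k : ℕ, f k ∈ Θ := fun k => hf ▸ Set.mem_range_self k
  -- the integrand
  set G : (Fin n → S) × (Fin n → Bool) → ℝ :=
    fun p => sSup ((fun v => (n : ℝ)⁻¹ * ∑ j, sgn (p.2 j) * v (p.1 j)) '' (hmap '' Θ)) with hG
  have himage : ∀ p : (Fin n → S) × (Fin n → Bool),
      ((fun v => (n : ℝ)⁻¹ * ∑ j, sgn (p.2 j) * v (p.1 j)) '' (hmap '' Θ))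
        = Set.range (fun k : ℕ => (n : ℝ)⁻¹ * ∑ j, sgn (p.2 j) * hmap (f k) (p.1 j)) := by
    intro p
    rw [Set.image_image, hf, ← Set.range_comp]
    rfl
  -- element bound
  have helem : ∀ θ ∈ Θ, ∀ (ξ : Fin n → S) (ω : Fin n → Bool),
      |(n : ℝ)⁻¹ * ∑ j, sgn (ω j) * hmap θ (ξ j)| ≤ M := by
    intro θ hθ ξ ω
    have h1 : |∑ j, sgn (ω j) * hmap θ (ξ j)| ≤ (n:ℝ) * M := by
      calc |∑ j, sgn (ω j) * hmap θ (ξ j)| ≤ ∑ j, |sgn (ω j) * hmap θ (ξ j)| :=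
            Finset.abs_sum_le_sum_abs _ _
        _ ≤ ∑ _j : Fin n, M := by
            apply Finset.sum_le_sum
            intro j _
            rw [abs_mul, sgn_abs, one_mul]
            exact hMb θ hθ (ξ j)
        _ = (n:ℝ) * M := by rw [Finset.sum_const]; simp
    rw [abs_mul, abs_inv, Nat.abs_cast, inv_mul_le_iff₀ hn']
    linarith
  -- measurability of G
  have hGmeas : Measurable G := by
    have hGeq : G = fun p => ⨆ k : ℕ, (n : ℝ)⁻¹ * ∑ j, sgn (p.2 j) * hmap (f k) (p.1 j) := by
      funext p
      rw [hG]
      exact congrArg sSup (himage p)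
    rw [hGeq]
    apply Measurable.iSup
    intro k
    apply Measurable.const_mul
    apply Finset.measurable_sum
    intro j _
    have m1 : Measurable fun p : (Fin n → S) × (Fin n → Bool) => hmap (f k) (p.1 j) :=
      (hmeas (f k) (hfΘ k)).comp ((measurable_pi_apply j).comp measurable_fst)
    have m2 : Measurable fun p : (Fin n → S) × (Fin n → Bool) => sgn (p.2 j) :=
      (measurable_from_top (f := sgn)).comp ((measurable_pi_apply j).comp measurable_snd)
    exact m2.mul m1
  -- boundedness of G
  have hGne : ∀ p : (Fin n → S) × (Fin n → Bool), ((fun v => (n : ℝ)⁻¹ * ∑ j, sgn (p.2 j) * v (p.1 j)) '' (hmap '' Θ)).Nonempty :=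
    fun p => (hΘne.image hmap).image _
  have hGbddA : ∀ p : (Fin n → S) × (Fin n → Bool), BddAbove ((fun v => (n : ℝ)⁻¹ * ∑ j, sgn (p.2 j) * v (p.1 j)) '' (hmap '' Θ)) := by
    intro p
    refine ⟨M, ?_⟩
    rintro y ⟨v, ⟨θ, hθ, rfl⟩, rfl⟩
    exact (abs_le.1 (helem θ hθ p.1 p.2)).2
  have hGbdd : ∀ p : (Fin n → S) × (Fin n → Bool), |G p| ≤ M := by
    intro p
    rw [abs_le]
    constructor
    · obtain ⟨y, hy⟩ := hGne p
      obtain ⟨v, ⟨θ, hθ, rfl⟩, rfl⟩ := hy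
      calc -M ≤ (n : ℝ)⁻¹ * ∑ j, sgn (p.2 j) * hmap θ (p.1 j) :=
            (abs_le.1 (helem θ hθ p.1 p.2)).1
        _ ≤ G p := le_csSup (hGbddA p) ⟨hmap θ, ⟨θ, hθ, rfl⟩, rfl⟩
    · apply csSup_le (hGne p)
      rintro y ⟨v, ⟨θ, hθ, rfl⟩, rfl⟩
      exact (abs_le.1 (helem θ hθ p.1 p.2)).2
  haveI : IsProbabilityMeasure (radMeasure ν n) := by
    unfold radMeasure
    infer_instance
  have hGint : Integrable G (radMeasure ν n) := by
    apply (integrable_const M).mono' hGmeas.aestronglyMeasurable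
    exact ae_of_all _ (fun p => by simpa [Real.norm_eq_abs] using hGbdd p)
  -- the Bool-side measure
  set μB := (Measure.pi fun _ : Fin n => (PMF.uniformOfFintype Bool).toMeasure) with hμB
  have hμsing : ∀ ω : Fin n → Bool, (μB {ω}).toReal = ((2:ℝ)^n)⁻¹ := by
    intro ω
    have h1 : μB {ω} = ((2:ENNReal))⁻¹ ^ n := by
      rw [hμB, ← Set.univ_pi_singleton ω, Measure.pi_pi]
      simp [PMF.toMeasure_apply_singleton _ _ (measurableSet_singleton _),
        PMF.uniformOfFintype_apply]
    rw [h1]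
    simp [ENNReal.toReal_pow, ← inv_pow]
  -- the per-sample bound
  set D := 4 / sn + (n:ℝ)⁻¹ * (M * sn * Real.sqrt (2 * C)) with hD
  have hxi : ∀ ξ : Fin n → S, (∫ ω, G (ξ, ω) ∂μB) ≤ D := by
    intro ξ
    set g : (Fin n → Bool) → ℝ :=
      fun ω => T.sup' hTne fun t => ∑ j, sgn (ω j) * hmap t (ξ j) with hg
    have hpt : ∀ ω : Fin n → Bool, G (ξ, ω) ≤ 4 / sn + (n:ℝ)⁻¹ * g ω := by
      intro ω
      apply csSup_le (hGne (ξ, ω))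
      rintro y ⟨v, ⟨θ, hθ, rfl⟩, rfl⟩
      show (n : ℝ)⁻¹ * ∑ j, sgn (ω j) * hmap θ (ξ j) ≤ 4 / sn + (n:ℝ)⁻¹ * g ω
      obtain ⟨t, htT, hcov⟩ := hTcover θ hθ
      have hsplit : (n : ℝ)⁻¹ * ∑ j, sgn (ω j) * hmap θ (ξ j)
          = (n : ℝ)⁻¹ * ∑ j, sgn (ω j) * hmap t (ξ j)
            + (n : ℝ)⁻¹ * ∑ j, sgn (ω j) * (hmap θ (ξ j) - hmap t (ξ j)) := by
        rw [← mul_add, ← Finset.sum_add_distrib]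
        congr 1
        apply Finset.sum_congr rfl
        intro j _
        ring
      rw [hsplit]
      have hfirst : (n : ℝ)⁻¹ * ∑ j, sgn (ω j) * hmap t (ξ j) ≤ (n:ℝ)⁻¹ * g ω := by
        apply mul_le_mul_of_nonneg_left ?_ (by positivity)
        exact Finset.le_sup' (f := fun t => ∑ j, sgn (ω j) * hmap t (ξ j)) htT
      have hsecond : (n : ℝ)⁻¹ * ∑ j, sgn (ω j) * (hmap θ (ξ j) - hmap t (ξ j)) ≤ 4 / sn := by
        have h1 : ∑ j, sgn (ω j) * (hmap θ (ξ j) - hmap t (ξ j)) ≤ (n:ℝ) * (4 / sn) := by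
          calc ∑ j, sgn (ω j) * (hmap θ (ξ j) - hmap t (ξ j))
              ≤ ∑ _j : Fin n, (4 / sn) := by
                apply Finset.sum_le_sum
                intro j _
                calc sgn (ω j) * (hmap θ (ξ j) - hmap t (ξ j))
                    ≤ |sgn (ω j) * (hmap θ (ξ j) - hmap t (ξ j))| := le_abs_self _
                  _ = |hmap θ (ξ j) - hmap t (ξ j)| := by rw [abs_mul, sgn_abs, one_mul]
                  _ ≤ Λ * Real.sqrt (∑ i, (θ i - t i) ^ 2) := hlip θ hθ t (hTsub htT) (ξ j)
                  _ ≤ 4 / sn := hcov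
            _ = (n:ℝ) * (4 / sn) := by rw [Finset.sum_const]; simp
        rw [inv_mul_le_iff₀ hn']
        linarith
      linarith
    have hint1 : Integrable (fun ω => G (ξ, ω)) μB := Integrable.of_finite
    have hint2 : Integrable (fun ω => 4 / sn + (n:ℝ)⁻¹ * g ω) μB := Integrable.of_finite
    calc (∫ ω, G (ξ, ω) ∂μB) ≤ ∫ ω, (4 / sn + (n:ℝ)⁻¹ * g ω) ∂μB :=
          integral_mono hint1 hint2 hpt
      _ = 4 / sn + (n:ℝ)⁻¹ * ∫ ω, g ω ∂μB := by
          haveI : IsProbabilityMeasure μB := by rw [hμB]; infer_instance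
          rw [integral_add (integrable_const _) Integrable.of_finite,
            integral_const, integral_const_mul]
          simp
      _ ≤ D := by
          rw [hD]
          have hsum : (∫ ω, g ω ∂μB) = ∑ ω : Fin n → Bool, ((2:ℝ)^n)⁻¹ * g ω := by
            rw [integral_fintype]
            swap
            · exact Integrable.of_finite
            apply Finset.sum_congr rfl
            intro ω _
            rw [Measure.real, hμsing ω, smul_eq_mul]
          have hmassart : (∑ ω : Fin n → Bool, ((2:ℝ)^n)⁻¹ * g ω)
              ≤ M * sn * Real.sqrt (2 * C) := by
            apply massart T hTne hn _ M hMpos ?_ C hC0 hTcard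
            intro t htT j
            exact hMb t (hTsub htT) (ξ j)
          have : (∫ ω, g ω ∂μB) ≤ M * sn * Real.sqrt (2 * C) := hsum ▸ hmassart
          have h2 : (n:ℝ)⁻¹ * (∫ ω, g ω ∂μB) ≤ (n:ℝ)⁻¹ * (M * sn * Real.sqrt (2 * C)) :=
            mul_le_mul_of_nonneg_left this (by positivity)
          linarith
  -- assemble
  haveI : IsProbabilityMeasure (Measure.pi fun _ : Fin n => ν) := by infer_instance
  have hGint' : Integrable G ((Measure.pi fun _ : Fin n => ν).prod μB) := hGint
  have hsplit : radComplexity ν n (hmap '' Θ)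
      = ∫ ξ, (∫ ω, G (ξ, ω) ∂μB) ∂(Measure.pi fun _ : Fin n => ν) := by
    rw [radComplexity, radMeasure]
    exact integral_prod G hGint'
  have hmain : radComplexity ν n (hmap '' Θ) ≤ D := by
    rw [hsplit]
    calc (∫ ξ, (∫ ω, G (ξ, ω) ∂μB) ∂(Measure.pi fun _ : Fin n => ν))
        ≤ ∫ _ξ, D ∂(Measure.pi fun _ : Fin n => ν) :=
          integral_mono (hGint'.integral_prod_left) (integrable_const D) hxi
      _ = D := by simp
  -- final arithmetic
  have hsqrt2 : Real.sqrt 2 ≤ 12 := by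
    nlinarith [Real.sq_sqrt (show (0:ℝ) ≤ 2 by norm_num), Real.sqrt_nonneg 2]
  have hDle : D ≤ 4 * (n : ℝ) ^ (-(1/2 : ℝ))
      + 12 * (n : ℝ) ^ (-(1/2 : ℝ)) * M * Real.sqrt C := by
    rw [hD, hrpow]
    have e1 : 4 / sn = 4 * sn⁻¹ := by ring
    have e2 : (n:ℝ)⁻¹ * (M * sn * Real.sqrt (2 * C))
        = sn⁻¹ * M * (Real.sqrt 2 * Real.sqrt C) := by
      rw [← Real.sqrt_mul (by norm_num : (0:ℝ) ≤ 2) C]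
      rw [← hsnsq]
      field_simp
    rw [e1, e2]
    have h3 : sn⁻¹ * M * (Real.sqrt 2 * Real.sqrt C) ≤ 12 * sn⁻¹ * M * Real.sqrt C := by
      have hh : 0 ≤ sn⁻¹ * M * Real.sqrt C := by positivity
      nlinarith [Real.sqrt_nonneg C, Real.sqrt_nonneg 2, hMpos.le, inv_nonneg.2 hsnpos.le]
    linarith
  exact hmain.trans hDle



end
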